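/- arXiv:1102.3079 — 2 statements merged into one kernel-verified Lean document; each statement's English description precedes it below -/
import Mathlib

section
/- If w is a finite block of digits of odd length such that ww is a prefix of d(l), then d(l) = w^ω (the infinite repetition of w). -/
noncomputable def negBetaT (β l x : ℝ) : ℝ := -β * x - ⌊-β * x - l⌋

noncomputable def negBetaDigit (β l x : ℝ) (i : ℕ) : ℤ :=
  ⌊-β * ((negBetaT β l)^[i] x) - l⌋

lemma negBetaT_mem (β l x : ℝ) : l ≤ negBetaT β l x ∧ negBetaT β l x < l + 1 := by
  unfold negBetaT
  constructor
  · have := Int.floor_le (-β * x - l); linarith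
  · have := Int.lt_floor_add_one (-β * x - l); linarith

lemma iter_succ (β l x : ℝ) (i : ℕ) :
    (negBetaT β l)^[i+1] x = -β * ((negBetaT β l)^[i] x) - negBetaDigit β l x i := by
  rw [Function.iterate_succ_apply']
  rfl

lemma diff_lemma (β l x y : ℝ) (m : ℕ)
    (h : ∀ i < m, negBetaDigit β l x i = negBetaDigit β l y i) :
    (negBetaT β l)^[m] x - (negBetaT β l)^[m] y = (-β)^m * (x - y) := by
  induction m with
  | zero => simp
  | succ m ih =>
    have ih' := ih (fun i hi => h i (Nat.lt_succ_of_lt hi))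
    rw [iter_succ, iter_succ, h m (Nat.lt_succ_self m), pow_succ]
    linear_combination (-β) * ih'

theorem stmt_14 (β l : ℝ) (hβ : 1 < β) (hl₁ : -1 < l) (hl₂ : l ≤ 0)
    (w : List ℤ) (hw : w ≠ []) (hodd : Odd w.length)
    (hpref : ∀ k < 2 * w.length, negBetaDigit β l l k = (w ++ w).getD k 0) :
    ∀ k : ℕ, negBetaDigit β l l k = w.getD (k % w.length) 0 := by
  set n := w.length with hn
  have hn0 : 0 < n := List.length_pos_iff.mpr hw
  have hprefw : ∀ i < n, negBetaDigit β l l i = w.getD i 0 := by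
    intro i hi
    rw [hpref i (by omega), List.getD_append _ _ _ _ hi]
  have hprefw2 : ∀ i < n, negBetaDigit β l l (n + i) = w.getD i 0 := by
    intro i hi
    rw [hpref (n + i) (by omega), List.getD_append_right _ _ _ _ (by omega)]
    congr 1
    omega
  set y := (negBetaT β l)^[n] l with hy
  have hdig : ∀ i < n, negBetaDigit β l y i = negBetaDigit β l l i := by
    intro i hi
    have h1 : negBetaDigit β l y i = negBetaDigit β l l (n + i) := by
      unfold negBetaDigit
      rw [hy, ← Function.iterate_add_apply, Nat.add_comm i n]
    rw [h1, hprefw2 i hi, hprefw i hi]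
  have hmem : ∀ m : ℕ, 0 < m → ∀ x : ℝ, l ≤ (negBetaT β l)^[m] x := by
    intro m hm x
    have h1 : (negBetaT β l)^[m] x = negBetaT β l ((negBetaT β l)^[m-1] x) := by
      conv_lhs => rw [show m = (m-1)+1 by omega]
      rw [Function.iterate_succ_apply']
    rw [h1]
    exact (negBetaT_mem β l _).1
  have hyl : l ≤ y := hmem n hn0 l
  have hTny : l ≤ (negBetaT β l)^[n] y := hmem n hn0 y
  have hdiff : (negBetaT β l)^[n] y - (negBetaT β l)^[n] l = (-β)^n * (y - l) :=
    diff_lemma β l y l n hdig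
  have hpow : (-β)^n = -(β^n) := Odd.neg_pow hodd β
  have hb : 1 < β ^ n := one_lt_pow₀ hβ hn0.ne'
  have hfix : y = l := by
    by_contra hne
    have hgt : l < y := lt_of_le_of_ne hyl (Ne.symm hne)
    rw [hpow, ← hy] at hdiff
    nlinarith [mul_lt_mul_of_pos_right hb (sub_pos.mpr hgt)]
  have hiter : ∀ j k : ℕ, (negBetaT β l)^[j * n + k] l = (negBetaT β l)^[k] l := by
    intro j k
    induction j with
    | zero => simp
    | succ j ih =>
      have h2 : (j + 1) * n + k = (j * n + k) + n := by ring
      rw [h2, Function.iterate_add_apply, ← hy, hfix, ih]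
  intro k
  have h2 : (k / n) * n + k % n = k := by
    rw [Nat.mul_comm]
    exact Nat.div_add_mod k n
  have h3 := hiter (k / n) (k % n)
  rw [h2] at h3
  have h4 : negBetaDigit β l l k = negBetaDigit β l l (k % n) := by
    unfold negBetaDigit
    rw [h3]
  rw [h4, hpref (k % n) (by have := Nat.mod_lt k hn0; omega),
    List.getD_append _ _ _ _ (Nat.mod_lt k hn0)]
end

section
/- If β is a Pisot number and l ∈ (-1, 0], then for every x ∈ [l, l+1) ∩ ℚ(β), the (-β,l)-expansion of x is eventually periodic. -/
-- step 1: invariance and digit bound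
lemma negBetaT_mem_s18 (β l : ℝ) (y : ℝ) : negBetaT β l y ∈ Set.Ico l (l + 1) := by
  have h1 : 0 ≤ Int.fract (-β * y - l) := Int.fract_nonneg _
  have h2 : Int.fract (-β * y - l) < 1 := Int.fract_lt_one _
  have : negBetaT β l y = Int.fract (-β * y - l) + l := by
    rw [negBetaT, Int.fract]; ring
  rw [this]
  constructor <;> [linarith; linarith]

lemma digit_bound (β l : ℝ) (hβ0 : 0 < β) (hl₁ : -1 < l) (hl₂ : l ≤ 0)
    {y : ℝ} (hy : y ∈ Set.Ico l (l + 1)) : |(⌊-β * y - l⌋ : ℝ)| ≤ β + 2 := by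
  obtain ⟨hy1, hy2⟩ := hy
  have h1 : ((⌊-β * y - l⌋ : ℤ) : ℝ) ≤ -β * y - l := Int.floor_le _
  have h2 : -β * y - l < (⌊-β * y - l⌋ : ℤ) + 1 := Int.lt_floor_add_one _
  have hu : β * (-y) ≤ β * 1 := by
    apply mul_le_mul_of_nonneg_left _ hβ0.le; linarith
  have hv : β * (-1 : ℝ) ≤ β * (-y) := by
    apply mul_le_mul_of_nonneg_left _ hβ0.le; linarith
  rw [abs_le]; constructor <;> nlinarith

/-- `β` is a Pisot number: an algebraic integer `> 1` all of whose other
complex conjugates (roots of its minimal polynomial over `ℚ`) have modulus `< 1`. -/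
def IsPisot (β : ℝ) : Prop :=
  1 < β ∧ IsIntegral ℤ β ∧
    ∀ z : ℂ, Polynomial.aeval z (minpoly ℚ β) = 0 → z ≠ (β : ℂ) → ‖z‖ < 1

def EventuallyPeriodic (u : ℕ → ℤ) : Prop :=
  ∃ N p : ℕ, 0 < p ∧ ∀ n ≥ N, u (n + p) = u n

theorem stmt_18 (β l : ℝ) (hβ : IsPisot β) (hl₁ : -1 < l) (hl₂ : l ≤ 0)
    (x : ℝ) (hx : x ∈ Set.Ico l (l + 1))
    (hxQ : x ∈ IntermediateField.adjoin ℚ {β}) :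
    EventuallyPeriodic (negBetaDigit β l x) := by
  obtain ⟨hβ1, hβint, hβconj⟩ := hβ
  have hβ0 : (0:ℝ) < β := lt_trans one_pos hβ1
  set T := negBetaT β l with hT
  -- orbit stays in the interval
  have horb : ∀ n, T^[n] x ∈ Set.Ico l (l + 1) := by
    intro n
    induction n with
    | zero => exact hx
    | succ n ih => rw [Function.iterate_succ_apply']; exact negBetaT_mem_s18 β l _
  -- digit bound
  have hdig : ∀ n, |((negBetaDigit β l x n : ℤ) : ℝ)| ≤ β + 2 := fun n =>
    digit_bound β l hβ0 hl₁ hl₂ (horb n)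
  -- the number field
  have hβQ : IsIntegral ℚ β := hβint.tower_top
  set K := IntermediateField.adjoin ℚ {β} with hK
  haveI : FiniteDimensional ℚ K := IntermediateField.adjoin.finiteDimensional hβQ
  haveI : NumberField K := ⟨⟩
  set b : K := IntermediateField.AdjoinSimple.gen ℚ β with hb
  -- orbit membership
  have hmem : ∀ n, T^[n] x ∈ K := by
    intro n
    induction n with
    | zero => exact hxQ
    | succ n ih =>
      rw [Function.iterate_succ_apply', hT, negBetaT]
      exact sub_mem (mul_mem (neg_mem (IntermediateField.mem_adjoin_simple_self ℚ β)) ih)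
        (intCast_mem K _)
  set y : ℕ → K := fun n => ⟨T^[n] x, hmem n⟩ with hy
  have hrec : ∀ n, y (n + 1) = -b * y n - ((negBetaDigit β l x n : ℤ) : K) := by
    intro n
    apply Subtype.ext
    show T^[n+1] x = _
    rw [Function.iterate_succ_apply']
    push_cast
    rw [hT, negBetaT, negBetaDigit]
    have hbcoe : (b:ℝ) = β := rfl
    rw [hbcoe]
  -- b is an algebraic integer
  have hbint : IsIntegral ℤ b := by
    rw [← isIntegral_algebraMap_iff (R := ℤ) (A := ↥K) (B := ℝ) (algebraMap (↥K) ℝ).injective]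
    exact hβint
  -- integral multiple of x
  set xK : K := ⟨x, hxQ⟩ with hxK
  have hxKalg : IsAlgebraic ℤ xK := by
    rw [IsFractionRing.isAlgebraic_iff ℤ ℚ (↥K)]
    exact (IsIntegral.of_finite ℚ xK).isAlgebraic
  obtain ⟨q, hq0, hqz⟩ := hxKalg.exists_integral_multiple
  have hcast : ∀ m : ℤ, IsIntegral ℤ ((m : ℤ) : K) := fun m => by
    simpa using isIntegral_algebraMap (R := ℤ) (A := ↥K) (x := m)
  have hqx : IsIntegral ℤ ((q : K) * xK) := by
    have h2 := hqz
    rw [zsmul_eq_mul] at h2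
    exact h2
  have hint : ∀ n, IsIntegral ℤ ((q : K) * y n) := by
    intro n
    induction n with
    | zero => exact hqx
    | succ n ih =>
      rw [hrec n]
      have heq : (q : K) * (-b * y n - ((negBetaDigit β l x n : ℤ) : K))
          = -(b * ((q : K) * y n)) - (((negBetaDigit β l x n * q : ℤ) : ℤ) : K) := by
        push_cast; ring
      rw [heq]
      exact ((hbint.mul ih).neg).sub (hcast _)
  -- conjugates of b are roots of minpoly ℚ β
  have hminb : minpoly ℚ β = minpoly ℚ b :=
    minpoly.algebraMap_eq (algebraMap (↥K) ℝ).injective b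
  have hroot : ∀ φ : ↥K →+* ℂ, Polynomial.aeval (φ b) (minpoly ℚ β) = 0 := by
    intro φ
    rw [hminb]
    have h2 := Polynomial.aeval_algHom_apply φ.toRatAlgHom b (minpoly ℚ b)
    rw [minpoly.aeval, map_zero] at h2
    exact h2
  -- the real embedding case
  have hreal : ∀ φ : ↥K →+* ℂ, φ b = (β : ℂ) → ∀ w : ↥K, φ w = ((w : ℝ) : ℂ) := by
    intro φ hφ w
    set ι : ↥K →+* ℂ := Complex.ofRealHom.comp (algebraMap (↥K) ℝ) with hι
    have hext : φ.toRatAlgHom = ι.toRatAlgHom := by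
      apply (IntermediateField.adjoin.powerBasis hβQ).algHom_ext
      show φ b = ι b
      rw [hφ]; rfl
    have := congrFun (congrArg (fun f : (↥K) →ₐ[ℚ] ℂ => (f : ↥K → ℂ)) hext) w
    exact this
  classical
  -- uniform bound on conjugates of orbit points
  set g : (↥K →+* ℂ) → ℝ := fun φ => max (max 1 ‖φ xK‖) ((β + 2) / (1 - ‖φ b‖)) with hg
  have hgb : ∀ (φ : ↥K →+* ℂ) (n : ℕ), ‖φ (y n)‖ ≤ g φ := by
    intro φ
    by_cases hφ : φ b = (β : ℂ)
    · intro n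
      rw [hreal φ hφ (y n)]
      rw [Complex.norm_real, Real.norm_eq_abs]
      obtain ⟨ha, hb'⟩ := horb n
      have habs : |((y n : ↥K) : ℝ)| ≤ 1 := by
        have h0 : ((y n : ↥K) : ℝ) = T^[n] x := rfl
        rw [h0, abs_le]; constructor <;> linarith
      exact le_trans habs (le_trans (le_max_left 1 _) (le_max_left _ _))
    · have hr : ‖φ b‖ < 1 := by
        exact hβconj _ (hroot φ) hφ
      have hr0 : (0:ℝ) ≤ ‖φ b‖ := norm_nonneg _
      have hg1 : (1:ℝ) ≤ g φ := le_trans (le_max_left 1 _) (le_max_left _ _)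
      have hkey : β + 2 ≤ (1 - ‖φ b‖) * g φ := by
        rw [← div_le_iff₀' (by linarith)]
        exact le_max_right _ _
      intro n
      induction n with
      | zero => exact le_trans (le_max_right 1 ‖φ xK‖) (le_max_left _ _)
      | succ n ih =>
        rw [hrec n]
        have hnormd : ‖((negBetaDigit β l x n : ℤ) : ℂ)‖ ≤ β + 2 := by
          rw [show ((negBetaDigit β l x n : ℤ) : ℂ)
              = (((negBetaDigit β l x n : ℤ) : ℝ) : ℂ) by push_cast; ring,
            Complex.norm_real, Real.norm_eq_abs]
          exact hdig n
        calc ‖φ (-b * y n - ((negBetaDigit β l x n : ℤ) : ↥K))‖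
            ≤ ‖φ (-b * y n)‖ + ‖φ (((negBetaDigit β l x n : ℤ) : ↥K))‖ := by
              rw [map_sub]; exact norm_sub_le _ _
          _ = ‖φ b‖ * ‖φ (y n)‖ + ‖((negBetaDigit β l x n : ℤ) : ℂ)‖ := by
              rw [map_mul, map_neg, norm_mul, norm_neg, map_intCast]
          _ ≤ ‖φ b‖ * g φ + (β + 2) :=
              add_le_add (mul_le_mul_of_nonneg_left ih hr0) hnormd
          _ ≤ g φ := by nlinarith
  have hne : (Finset.univ : Finset (↥K →+* ℂ)).Nonempty :=
    ⟨Complex.ofRealHom.comp (algebraMap (↥K) ℝ), Finset.mem_univ _⟩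
  set B : ℝ := |(q : ℝ)| * (Finset.univ.sup' hne g) with hB
  have hbound : ∀ (n : ℕ) (φ : ↥K →+* ℂ), ‖φ ((q : ↥K) * y n)‖ ≤ B := by
    intro n φ
    rw [map_mul, norm_mul, map_intCast]
    have h1 : ‖((q:ℤ):ℂ)‖ = |(q:ℝ)| := by
      rw [show ((q:ℤ):ℂ) = (((q:ℤ):ℝ):ℂ) by push_cast; ring, Complex.norm_real,
        Real.norm_eq_abs]
    rw [h1]
    exact mul_le_mul (le_refl _)
      (le_trans (hgb φ n) (Finset.le_sup' g (Finset.mem_univ φ)))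
      (norm_nonneg _) (abs_nonneg _)
  have hfin : (Set.range fun n => (q : ↥K) * y n).Finite := by
    apply Set.Finite.subset (NumberField.Embeddings.finite_of_norm_le (↥K) ℂ B)
    rintro _ ⟨n, rfl⟩
    exact ⟨hint n, fun φ => hbound n φ⟩
  have hninj : ¬ Function.Injective (fun n => (q : ↥K) * y n) := by
    intro hinj
    exact Set.infinite_range_of_injective hinj hfin
  obtain ⟨m, n, hmn, hne'⟩ := Function.not_injective_iff.mp hninj
  have hqK : ((q:ℤ) : ↥K) ≠ 0 := Int.cast_ne_zero.mpr hq0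
  have hy_eq : y m = y n := mul_left_cancel₀ hqK hmn
  have hT_eq : T^[m] x = T^[n] x := congrArg Subtype.val hy_eq
  have key : ∀ m n : ℕ, m < n → T^[m] x = T^[n] x →
      EventuallyPeriodic (negBetaDigit β l x) := by
    intro m n hmn' heq
    refine ⟨m, n - m, Nat.sub_pos_of_lt hmn', ?_⟩
    intro k hk
    obtain ⟨j, rfl⟩ := Nat.exists_eq_add_of_le hk
    have hTk : T^[m + j + (n - m)] x = T^[m + j] x := by
      have h1 : m + j + (n - m) = j + n := by omega
      rw [h1, Function.iterate_add_apply, ← heq, ← Function.iterate_add_apply,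
        Nat.add_comm j m]
    unfold negBetaDigit
    rw [← hT, hTk]
  rcases hne'.lt_or_gt with hlt | hlt
  · exact key m n hlt hT_eq
  · exact key n m hlt hT_eq.symm
end
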